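/- Fix n ≥ 1, a horizon N ≥ 1, and a time step k ∈ {0,…,N−1}. Let ρ > 0 and C(k) > 0, and let λ_k ∈ ℝ with λ_k C(k) = − Σ_{t=k+1}^{N} Σ_{i=1}^{n} v_{i,t}ᵀ Q_i w_{i,t} − Σ_{i=1}^{n} u_iᵀ R_i u_i, where for each i: Q_i and R_i are symmetric positive definite matrices, v_{i,t} = A_i^{t−k−1} B_i u_i and w_{i,t} = A_i^t x_i + Σ_{j=0}^{t−1} A_i^{t−j−1} B_i u_i(j) for vectors u_i, u_i(j) ∈ ℝ^m (with u_i(k) = u_i) and x_i ∈ ℝ^d. Suppose ‖A_i‖ ≤ α, ‖B_i‖ ≤ β, ‖x_i‖ ≤ γ, ‖Q_i‖ ≤ δ, ‖u_i(j)‖ ≤ √(C(j)/ρ) for all j ∈ {0,…,N−1} and given C(j) ≥ 0 (with C(k) > 0). Then λ_k ≤ (1/C(k)) Σ_{t=k+1}^{N} [ n α^{2t−k−1} β √(C(k)/ρ) δ γ + n β² √(C(k)/ρ) δ Σ_{j=0, j≠k}^{t−1} α^{2t−j−k−2} √(C(j)/ρ) ]. -/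

import Mathlib

open Finset Matrix
open scoped RealInnerProductSpace

/-- The operator norm of a matrix induced by the Euclidean norms. -/
noncomputable def matNorm {d m : ℕ} (M : Matrix (Fin d) (Fin m) ℝ) : ℝ :=
  ‖LinearMap.toContinuousLinearMap (Matrix.toEuclideanLin M)‖


lemma matNorm_nonneg {d m : ℕ} (M : Matrix (Fin d) (Fin m) ℝ) : 0 ≤ matNorm M :=
  norm_nonneg _

lemma matNorm_apply_le {d m : ℕ} (M : Matrix (Fin d) (Fin m) ℝ) (z : EuclideanSpace ℝ (Fin m)) :
    ‖Matrix.toEuclideanLin M z‖ ≤ matNorm M * ‖z‖ := by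
  have := (LinearMap.toContinuousLinearMap (Matrix.toEuclideanLin M)).le_opNorm z
  simpa [matNorm] using this

lemma matNorm_le_bound {d m : ℕ} {M : Matrix (Fin d) (Fin m) ℝ} {c : ℝ} (hc : 0 ≤ c)
    (h : ∀ z, ‖Matrix.toEuclideanLin M z‖ ≤ c * ‖z‖) : matNorm M ≤ c :=
  ContinuousLinearMap.opNorm_le_bound _ hc (by simpa using h)

lemma toEuclideanLin_mul_apply {d e f : ℕ} (M : Matrix (Fin d) (Fin e) ℝ)
    (P : Matrix (Fin e) (Fin f) ℝ) (z : EuclideanSpace ℝ (Fin f)) :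
    Matrix.toEuclideanLin (M * P) z = Matrix.toEuclideanLin M (Matrix.toEuclideanLin P z) := by
  simp [Matrix.toEuclideanLin_apply, Matrix.mulVec_mulVec]

lemma matNorm_pow_le {d : ℕ} {A : Matrix (Fin d) (Fin d) ℝ} {α : ℝ} (hα : 0 ≤ α)
    (hA : matNorm A ≤ α) (p : ℕ) : matNorm (A ^ p) ≤ α ^ p := by
  induction p with
  | zero =>
    refine matNorm_le_bound (by norm_num) fun z => ?_
    simp [Matrix.toEuclideanLin_apply, Matrix.one_mulVec]
  | succ p ih =>
    refine matNorm_le_bound (by positivity) fun z => ?_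
    rw [pow_succ', toEuclideanLin_mul_apply]
    calc ‖Matrix.toEuclideanLin A (Matrix.toEuclideanLin (A ^ p) z)‖
        ≤ matNorm A * ‖Matrix.toEuclideanLin (A ^ p) z‖ := matNorm_apply_le _ _
      _ ≤ α * (α ^ p * ‖z‖) := by
          exact mul_le_mul hA ((matNorm_apply_le _ _).trans
            (mul_le_mul_of_nonneg_right ih (norm_nonneg _))) (norm_nonneg _) hα
      _ = α ^ (p+1) * ‖z‖ := by ring

lemma posSemidef_inner_nonneg {d : ℕ} {Q : Matrix (Fin d) (Fin d) ℝ} (hQ : Q.PosSemidef)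
    (z : EuclideanSpace ℝ (Fin d)) : 0 ≤ ⟪z, Matrix.toEuclideanLin Q z⟫ := by
  have := hQ.re_dotProduct_nonneg (WithLp.equiv 2 _ z)
  simpa [PiLp.inner_apply, dotProduct, Matrix.toEuclideanLin_apply, mul_comm] using this


/-- the central estimate (from equation (25) to equation (24)) in the proof
of Theorem 2: the explicit price formula together with the stated norm bounds yields the
upper bound on `λ_k`. -/
theorem stmt_15 {d m : ℕ} (n N k : ℕ) (hn : 1 ≤ n) (hN : 1 ≤ N) (hk : k < N)
    (ρ : ℝ) (hρ : 0 < ρ)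
    (C : ℕ → ℝ) (hCk : 0 < C k) (hC : ∀ j, 0 ≤ C j)
    (α β γ δ : ℝ)
    (A : Fin n → Matrix (Fin d) (Fin d) ℝ) (hA : ∀ i, matNorm (A i) ≤ α)
    (B : Fin n → Matrix (Fin d) (Fin m) ℝ) (hB : ∀ i, matNorm (B i) ≤ β)
    (Q : Fin n → Matrix (Fin d) (Fin d) ℝ) (hQ : ∀ i, (Q i).PosDef)
    (hQn : ∀ i, matNorm (Q i) ≤ δ)
    (R : Fin n → Matrix (Fin m) (Fin m) ℝ) (hR : ∀ i, (R i).PosDef)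
    (x : Fin n → EuclideanSpace ℝ (Fin d)) (hx : ∀ i, ‖x i‖ ≤ γ)
    (u : Fin n → ℕ → EuclideanSpace ℝ (Fin m))
    (hu : ∀ i, ∀ j, j < N → ‖u i j‖ ≤ Real.sqrt (C j / ρ))
    (v : Fin n → ℕ → EuclideanSpace ℝ (Fin d))
    (hv : ∀ i t, v i t = Matrix.toEuclideanLin ((A i) ^ (t - k - 1) * B i) (u i k))
    (w : Fin n → ℕ → EuclideanSpace ℝ (Fin d))
    (hw : ∀ i t, w i t = Matrix.toEuclideanLin ((A i) ^ t) (x i)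
        + ∑ j ∈ range t, Matrix.toEuclideanLin ((A i) ^ (t - j - 1) * B i) (u i j))
    (lam : ℝ)
    (hlam : lam * C k
      = - ∑ t ∈ Icc (k + 1) N, ∑ i, ⟪v i t, Matrix.toEuclideanLin (Q i) (w i t)⟫
        - ∑ i, ⟪u i k, Matrix.toEuclideanLin (R i) (u i k)⟫) :
    lam ≤ (1 / C k) * ∑ t ∈ Icc (k + 1) N,
        ((n : ℝ) * α ^ (2 * t - k - 1) * β * Real.sqrt (C k / ρ) * δ * γ
          + (n : ℝ) * β ^ 2 * Real.sqrt (C k / ρ) * δ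
            * ∑ j ∈ (range t).erase k, α ^ (2 * t - j - k - 2) * Real.sqrt (C j / ρ)) := by
  have i0 : Fin n := ⟨0, hn⟩
  have hα : 0 ≤ α := (matNorm_nonneg _).trans (hA i0)
  have hβ : 0 ≤ β := (matNorm_nonneg _).trans (hB i0)
  have hδ : 0 ≤ δ := (matNorm_nonneg _).trans (hQn i0)
  have hγ : 0 ≤ γ := (norm_nonneg _).trans (hx i0)
  have hsq : ∀ j : ℕ, 0 ≤ Real.sqrt (C j / ρ) := fun j => Real.sqrt_nonneg _
  rw [one_div_mul_eq_div, le_div_iff₀ hCk, hlam]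
  have hRterm : 0 ≤ ∑ i, ⟪u i k, Matrix.toEuclideanLin (R i) (u i k)⟫ :=
    Finset.sum_nonneg fun i _ => posSemidef_inner_nonneg (hR i).posSemidef _
  have main : - ∑ t ∈ Icc (k + 1) N, ∑ i, ⟪v i t, Matrix.toEuclideanLin (Q i) (w i t)⟫
      ≤ ∑ t ∈ Icc (k + 1) N,
        ((n : ℝ) * α ^ (2 * t - k - 1) * β * Real.sqrt (C k / ρ) * δ * γ
          + (n : ℝ) * β ^ 2 * Real.sqrt (C k / ρ) * δ
            * ∑ j ∈ (range t).erase k, α ^ (2 * t - j - k - 2) * Real.sqrt (C j / ρ)) := by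
    rw [← Finset.sum_neg_distrib]
    refine Finset.sum_le_sum fun t ht => ?_
    obtain ⟨hkt, htN⟩ := Finset.mem_Icc.mp ht
    -- generic norm bound for A^p * B applied to a vector
    have genb : ∀ (i : Fin n) (p : ℕ) (z : EuclideanSpace ℝ (Fin m)) (c : ℝ), 0 ≤ c → ‖z‖ ≤ c →
        ‖Matrix.toEuclideanLin (A i ^ p * B i) z‖ ≤ α ^ p * β * c := by
      intro i p z c hc hz
      rw [toEuclideanLin_mul_apply]
      calc ‖Matrix.toEuclideanLin (A i ^ p) (Matrix.toEuclideanLin (B i) z)‖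
          ≤ matNorm (A i ^ p) * ‖Matrix.toEuclideanLin (B i) z‖ := matNorm_apply_le _ _
        _ ≤ α ^ p * (β * c) := by
            refine mul_le_mul (matNorm_pow_le hα (hA i) p)
              ((matNorm_apply_le _ _).trans
                (mul_le_mul (hB i) hz (norm_nonneg _) hβ)) (norm_nonneg _) (by positivity)
        _ = α ^ p * β * c := by ring
    have perI : ∀ i : Fin n, -⟪v i t, Matrix.toEuclideanLin (Q i) (w i t)⟫
        ≤ α ^ (2 * t - k - 1) * β * Real.sqrt (C k / ρ) * δ * γ
          + β ^ 2 * Real.sqrt (C k / ρ) * δ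
            * ∑ j ∈ (range t).erase k, α ^ (2 * t - j - k - 2) * Real.sqrt (C j / ρ) := by
      intro i
      have hvn : ‖v i t‖ ≤ α ^ (t - k - 1) * β * Real.sqrt (C k / ρ) := by
        rw [hv i t]; exact genb i _ _ _ (hsq k) (hu i k hk)
      have hQb : ∀ (z : EuclideanSpace ℝ (Fin d)) (c : ℝ), 0 ≤ c → ‖z‖ ≤ c →
          -⟪v i t, Matrix.toEuclideanLin (Q i) z⟫
            ≤ α ^ (t - k - 1) * β * Real.sqrt (C k / ρ) * (δ * c) := by
        intro z c hc hz
        calc -⟪v i t, Matrix.toEuclideanLin (Q i) z⟫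
            ≤ ‖v i t‖ * ‖Matrix.toEuclideanLin (Q i) z‖ :=
              (neg_le_abs _).trans (abs_real_inner_le_norm _ _)
          _ ≤ α ^ (t - k - 1) * β * Real.sqrt (C k / ρ) * (δ * c) := by
              refine mul_le_mul hvn ((matNorm_apply_le _ _).trans
                (mul_le_mul (hQn i) hz (norm_nonneg _) hδ)) (norm_nonneg _) (by positivity)
      have expand : ⟪v i t, Matrix.toEuclideanLin (Q i) (w i t)⟫
          = ⟪v i t, Matrix.toEuclideanLin (Q i) (Matrix.toEuclideanLin ((A i) ^ t) (x i))⟫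
            + (⟪v i t, Matrix.toEuclideanLin (Q i) (v i t)⟫
            + ∑ j ∈ (range t).erase k, ⟪v i t, Matrix.toEuclideanLin (Q i)
                (Matrix.toEuclideanLin ((A i) ^ (t - j - 1) * B i) (u i j))⟫) := by
        have hsplit := (Finset.add_sum_erase (range t)
          (fun j => ⟪v i t, Matrix.toEuclideanLin (Q i)
            (Matrix.toEuclideanLin ((A i) ^ (t - j - 1) * B i) (u i j))⟫)
          (Finset.mem_range.mpr (show k < t by omega))).symm
        rw [hw i t, map_add, inner_add_right, map_sum, inner_sum, hsplit, ← hv i t]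
      have hqv : 0 ≤ ⟪v i t, Matrix.toEuclideanLin (Q i) (v i t)⟫ :=
        posSemidef_inner_nonneg (hQ i).posSemidef _
      have b1 : -⟪v i t, Matrix.toEuclideanLin (Q i) (Matrix.toEuclideanLin ((A i) ^ t) (x i))⟫
          ≤ α ^ (2 * t - k - 1) * β * Real.sqrt (C k / ρ) * δ * γ := by
        have hz : ‖Matrix.toEuclideanLin ((A i) ^ t) (x i)‖ ≤ α ^ t * γ :=
          (matNorm_apply_le _ _).trans
            (mul_le_mul (matNorm_pow_le hα (hA i) t) (hx i) (norm_nonneg _) (by positivity))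
        have hpow : α ^ (t - k - 1) * α ^ t = α ^ (2 * t - k - 1) := by
          rw [← pow_add]; congr 1; omega
        calc -⟪v i t, Matrix.toEuclideanLin (Q i) (Matrix.toEuclideanLin ((A i) ^ t) (x i))⟫
            ≤ α ^ (t - k - 1) * β * Real.sqrt (C k / ρ) * (δ * (α ^ t * γ)) :=
              hQb _ (α ^ t * γ) (by positivity) hz
          _ = α ^ (2 * t - k - 1) * β * Real.sqrt (C k / ρ) * δ * γ := by
              rw [← hpow]; ring
      have b2 : -∑ j ∈ (range t).erase k, ⟪v i t, Matrix.toEuclideanLin (Q i)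
              (Matrix.toEuclideanLin ((A i) ^ (t - j - 1) * B i) (u i j))⟫
          ≤ β ^ 2 * Real.sqrt (C k / ρ) * δ
            * ∑ j ∈ (range t).erase k, α ^ (2 * t - j - k - 2) * Real.sqrt (C j / ρ) := by
        rw [← Finset.sum_neg_distrib, Finset.mul_sum]
        refine Finset.sum_le_sum fun j hj => ?_
        obtain ⟨hjk, hjt⟩ := Finset.mem_erase.mp hj
        have hjt' : j < t := Finset.mem_range.mp hjt
        have hz : ‖Matrix.toEuclideanLin ((A i) ^ (t - j - 1) * B i) (u i j)‖
            ≤ α ^ (t - j - 1) * β * Real.sqrt (C j / ρ) :=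
          genb i _ _ _ (hsq j) (hu i j (by omega))
        have hpow : α ^ (t - k - 1) * α ^ (t - j - 1) = α ^ (2 * t - j - k - 2) := by
          rw [← pow_add]; congr 1; omega
        calc -⟪v i t, Matrix.toEuclideanLin (Q i)
              (Matrix.toEuclideanLin ((A i) ^ (t - j - 1) * B i) (u i j))⟫
            ≤ α ^ (t - k - 1) * β * Real.sqrt (C k / ρ)
                * (δ * (α ^ (t - j - 1) * β * Real.sqrt (C j / ρ))) :=
              hQb _ _ (by positivity) hz
          _ = β ^ 2 * Real.sqrt (C k / ρ) * δ
                * (α ^ (2 * t - j - k - 2) * Real.sqrt (C j / ρ)) := by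
              rw [← hpow]; ring
      calc -⟪v i t, Matrix.toEuclideanLin (Q i) (w i t)⟫
          = -⟪v i t, Matrix.toEuclideanLin (Q i) (Matrix.toEuclideanLin ((A i) ^ t) (x i))⟫
            - ⟪v i t, Matrix.toEuclideanLin (Q i) (v i t)⟫
            - ∑ j ∈ (range t).erase k, ⟪v i t, Matrix.toEuclideanLin (Q i)
                (Matrix.toEuclideanLin ((A i) ^ (t - j - 1) * B i) (u i j))⟫ := by
            rw [expand]; ring
        _ ≤ _ := by
            have := b1; have := b2; linarith
    calc -∑ i, ⟪v i t, Matrix.toEuclideanLin (Q i) (w i t)⟫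
        = ∑ i, -⟪v i t, Matrix.toEuclideanLin (Q i) (w i t)⟫ := by
          rw [Finset.sum_neg_distrib]
      _ ≤ ∑ _i : Fin n, (α ^ (2 * t - k - 1) * β * Real.sqrt (C k / ρ) * δ * γ
          + β ^ 2 * Real.sqrt (C k / ρ) * δ
            * ∑ j ∈ (range t).erase k, α ^ (2 * t - j - k - 2) * Real.sqrt (C j / ρ)) :=
          Finset.sum_le_sum fun i _ => perI i
      _ = _ := by
          rw [Finset.sum_const, Finset.card_univ, Fintype.card_fin, nsmul_eq_mul]; ring
  linarith
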